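/- Let f : ℝ³ → ℝ be a nonnegative symmetric-in-nothing integrable function. Then by symmetrization and energy conservation, ∫∫∫_{S²₊} ω·(v−v₁) |v'|² f(v)f(v₁) dω dv dv₁ = (π/2) ∫∫ |v−v₁| (|v|² + |v₁|²) f(v)f(v₁) dv dv₁, where v' = v − ω[ω·(v−v₁)] and S²₊ = {ω : (v−v₁)·ω ≥ 0}. -/

import Mathlib

open MeasureTheory Real Metric Set

noncomputable section

local notation "E3" => EuclideanSpace ℝ (Fin 3)

lemma transfer (G : E3 → ℝ) (K : ℝ → ℝ) :
    (∫ ω : sphere (0:E3) 1, G ω ∂(volume : Measure E3).toSphere)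
      * (∫ r : Set.Ioi (0:ℝ), K r ∂(Measure.volumeIoiPow 2)) =
    ∫ x : E3, G (‖x‖⁻¹ • x) * K ‖x‖ := by
  have h := (volume : Measure E3).measurePreserving_homeomorphUnitSphereProd
  have hdim : Module.finrank ℝ E3 = 3 := finrank_euclideanSpace_fin
  rw [hdim] at h
  norm_num at h
  rw [← MeasureTheory.integral_prod_mul]
  have h2 := h.integral_comp (Homeomorph.measurableEmbedding _)
      (fun p : sphere (0:E3) 1 × Set.Ioi (0:ℝ) => G p.1 * K p.2)
  rw [← h2]
  simp only [homeomorphUnitSphereProd_apply_fst_coe, homeomorphUnitSphereProd_apply_snd_coe]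
  rw [integral_subtype_comap (measurableSet_singleton (0:E3)).compl
      (fun x => G (‖x‖⁻¹ • x) * K ‖x‖), MeasureTheory.restrict_compl_singleton]


def KK : ℝ → ℝ := (Set.Iic (1:ℝ)).indicator id

lemma Kint : ∫ r : Set.Ioi (0:ℝ), KK r ∂(Measure.volumeIoiPow 2) = 1/4 := by
  rw [Measure.volumeIoiPow]
  simp only [ENNReal.ofReal]
  rw [integral_withDensity_eq_integral_smul (by
        exact (measurable_subtype_coe.pow_const _).real_toNNReal)]
  rw [integral_subtype_comap measurableSet_Ioi (fun a : ℝ => Real.toNNReal (a ^ 2) • KK a)]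
  rw [setIntegral_congr_fun measurableSet_Ioi
      (g := (Set.Ioc (0:ℝ) 1).indicator (fun a => a ^ 3)) (fun x hx => by
    simp only [KK, Set.indicator, Set.mem_Iic, Set.mem_Ioc, NNReal.smul_def,
      Real.coe_toNNReal _ (pow_nonneg (le_of_lt hx) 2), smul_eq_mul, id]
    rcases le_or_gt x 1 with h | h
    · simp only [h, if_true, hx.out, true_and]
      ring
    · simp [not_le.2 h, h.not_ge] )]
  rw [integral_indicator measurableSet_Ioc, Measure.restrict_restrict measurableSet_Ioc,
    Set.inter_eq_left.2 Set.Ioc_subset_Ioi_self]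
  rw [← intervalIntegral.integral_of_le (by norm_num : (0:ℝ) ≤ 1)]
  rw [integral_pow]; norm_num





lemma master (G : E3 → ℝ) :
    ∫ ω : sphere (0:E3) 1, G ω ∂(volume : Measure E3).toSphere
      = 4 * ∫ x : E3, G (‖x‖⁻¹ • x) * KK ‖x‖ := by
  have h := transfer G KK
  rw [Kint] at h
  linarith

lemma sphere_neg_inv (G : E3 → ℝ) :
    ∫ ω : sphere (0:E3) 1, G (-(ω:E3)) ∂(volume : Measure E3).toSphere
      = ∫ ω : sphere (0:E3) 1, G (ω:E3) ∂(volume : Measure E3).toSphere := by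
  rw [master (fun y => G (-y)), master G]
  congr 1
  calc ∫ x : E3, G (-(‖x‖⁻¹ • x)) * KK ‖x‖
      = ∫ x : E3, (fun y : E3 => G (‖y‖⁻¹ • y) * KK ‖y‖) (-x) := by
        congr 1; funext x; simp [smul_neg]
    _ = _ := integral_neg_eq_self (fun y : E3 => G (‖y‖⁻¹ • y) * KK ‖y‖) volume


-- preimage of sum-of-squares set is closed ball
lemma hset_preimage (n : ℕ) (r : ℝ) (hr : 0 ≤ r) :
    (MeasurableEquiv.toLp 2 (Fin n → ℝ)).symm ⁻¹' {z : Fin n → ℝ | ∑ i, z i ^ 2 ≤ r ^ 2}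
      = closedBall (0 : EuclideanSpace ℝ (Fin n)) r := by
  ext y
  simp only [Set.mem_preimage, Set.mem_setOf_eq, mem_closedBall, dist_zero_right,
    EuclideanSpace.norm_eq]
  have happ : ∀ i, (MeasurableEquiv.toLp 2 (Fin n → ℝ)).symm y i = y i := fun i => rfl
  simp_rw [happ, Real.norm_eq_abs, sq_abs]
  rw [show r = Real.sqrt (r ^ 2) by rw [Real.sqrt_sq hr]]
  rw [Real.sqrt_le_sqrt_iff (by positivity)]
  rw [Real.sq_sqrt (by positivity : (0:ℝ) ≤ r ^ 2)]

lemma vol_sumsq (r : ℝ) (hr : 0 ≤ r) :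
    (volume : Measure (Fin 2 → ℝ)) {z : Fin 2 → ℝ | ∑ i, z i ^ 2 ≤ r ^ 2}
      = ENNReal.ofReal (r ^ 2 * π) := by
  have hP := EuclideanSpace.volume_preserving_symm_measurableEquiv_toLp (Fin 2)
  have hmeas : MeasurableSet {z : Fin 2 → ℝ | ∑ i, z i ^ 2 ≤ r ^ 2} :=
    measurableSet_le (by fun_prop) measurable_const
  rw [← hP.measure_preimage hmeas.nullMeasurableSet, hset_preimage 2 r hr,
    EuclideanSpace.volume_closedBall]
  have : (Real.sqrt π ^ (Fintype.card (Fin 2)) / Real.Gamma ((Fintype.card (Fin 2)) / 2 + 1)) = π := by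
    norm_num [Real.sq_sqrt Real.pi_nonneg, Real.Gamma_two]
  rw [this]
  rw [Fintype.card_fin, ← ENNReal.ofReal_pow hr, ← ENNReal.ofReal_mul (by positivity)]

lemma Jval : ∫ y : E3, (closedBall (0:E3) 1).indicator (fun y : E3 => |y 0|) y = π / 2 := by
  have hP := EuclideanSpace.volume_preserving_symm_measurableEquiv_toLp (Fin 3)
  set s3 : Set (Fin 3 → ℝ) := {z : Fin 3 → ℝ | ∑ i, z i ^ 2 ≤ 1} with hs3
  have step1 : ∫ y : E3, (closedBall (0:E3) 1).indicator (fun y : E3 => |y 0|) y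
      = ∫ z : Fin 3 → ℝ, s3.indicator (fun z => |z 0|) z := by
    rw [← hP.integral_comp (MeasurableEquiv.toLp 2 (Fin 3 → ℝ)).symm.measurableEmbedding
        (s3.indicator (fun z => |z 0|))]
    congr 1; funext y
    have hm : (MeasurableEquiv.toLp 2 (Fin 3 → ℝ)).symm y ∈ s3 ↔ y ∈ closedBall (0:E3) 1 := by
      rw [← Set.mem_preimage, hs3,
        show {z : Fin 3 → ℝ | ∑ i, z i ^ 2 ≤ 1} = {z : Fin 3 → ℝ | ∑ i, z i ^ 2 ≤ 1^2} by
          norm_num,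
        hset_preimage 3 1 zero_le_one]
    by_cases h : y ∈ closedBall (0:E3) 1
    · rw [Set.indicator_of_mem (hm.2 h), Set.indicator_of_mem h]; rfl
    · rw [Set.indicator_of_notMem (fun c => h (hm.1 c)), Set.indicator_of_notMem h]
  rw [step1]
  set B2 : Set (ℝ × (Fin 2 → ℝ)) := {p | p.1 ^ 2 + ∑ i, p.2 i ^ 2 ≤ 1} with hB2
  have hB2m : MeasurableSet B2 := measurableSet_le (by fun_prop) measurable_const
  have m := measurePreserving_piFinSuccAbove (fun _ : Fin 3 => (volume : Measure ℝ)) 0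
  have step2 : ∫ z : Fin 3 → ℝ, s3.indicator (fun z => |z 0|) z
      = ∫ p : ℝ × (Fin 2 → ℝ), B2.indicator (fun p => |p.1|) p
          ∂((volume : Measure ℝ).prod (volume : Measure (Fin 2 → ℝ))) := by
    rw [volume_pi, show (volume : Measure (Fin 2 → ℝ)) = Measure.pi (fun _ => volume) from
      volume_pi]
    rw [← m.integral_comp (MeasurableEquiv.piFinSuccAbove (fun _ : Fin 3 => ℝ) 0).measurableEmbedding
        (B2.indicator (fun p => |p.1|))]
    congr 1
  rw [step2]
  -- integrability for Fubini
  have hsub : B2 ⊆ (Set.Icc (-1:ℝ) 1) ×ˢ {w : Fin 2 → ℝ | ∑ i, w i ^ 2 ≤ 1} := by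
    rintro ⟨z, w⟩ hp
    have h1 : (0:ℝ) ≤ ∑ i, w i ^ 2 := by positivity
    have h2 : z ^ 2 + ∑ i, w i ^ 2 ≤ 1 := hp
    exact ⟨Set.mem_Icc.2 ⟨by nlinarith, by nlinarith⟩, by
      simp only [Set.mem_setOf_eq]; nlinarith⟩
  have hfin : ((volume : Measure ℝ).prod (volume : Measure (Fin 2 → ℝ))) B2 < ⊤ := by
    refine lt_of_le_of_lt (measure_mono hsub) ?_
    rw [Measure.prod_prod]
    rw [show {w : Fin 2 → ℝ | ∑ i, w i ^ 2 ≤ 1} = {w : Fin 2 → ℝ | ∑ i, w i ^ 2 ≤ 1^2} by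
      norm_num, vol_sumsq 1 zero_le_one]
    exact ENNReal.mul_lt_top (by simp) ENNReal.ofReal_lt_top
  have hint : Integrable (B2.indicator (fun p : ℝ × (Fin 2 → ℝ) => |p.1|))
      ((volume : Measure ℝ).prod (volume : Measure (Fin 2 → ℝ))) := by
    rw [integrable_indicator_iff hB2m]
    refine Integrable.mono' (g := fun _ => (1:ℝ))
      (integrableOn_const hfin.ne) (measurable_fst.abs.aestronglyMeasurable) ?_
    filter_upwards [ae_restrict_mem hB2m] with p hp
    have h1 : (0:ℝ) ≤ ∑ i, p.2 i ^ 2 := by positivity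
    have h2 : p.1 ^ 2 + ∑ i, p.2 i ^ 2 ≤ 1 := hp
    rw [Real.norm_eq_abs, abs_abs]
    nlinarith [abs_nonneg p.1, sq_abs p.1]
  rw [MeasureTheory.integral_prod _ hint]
  -- inner ℝ integral
  have inner_eq : ∀ z : ℝ, (∫ w : Fin 2 → ℝ, B2.indicator (fun p : ℝ × (Fin 2 → ℝ) => |p.1|) (z, w))
      = (Set.Icc (-1:ℝ) 1).indicator (fun z => (1 - z ^ 2) * π * |z|) z := by
    intro z
    have hAz : ∀ w : Fin 2 → ℝ, B2.indicator (fun p : ℝ × (Fin 2 → ℝ) => |p.1|) (z, w)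
        = {w : Fin 2 → ℝ | ∑ i, w i ^ 2 ≤ 1 - z ^ 2}.indicator (fun _ => |z|) w := by
      intro w
      have : ((z, w) ∈ B2) ↔ w ∈ {w : Fin 2 → ℝ | ∑ i, w i ^ 2 ≤ 1 - z ^ 2} := by
        simp only [hB2, Set.mem_setOf_eq]; constructor <;> intro h <;> linarith
      by_cases h : (z, w) ∈ B2
      · rw [Set.indicator_of_mem h, Set.indicator_of_mem (this.1 h)]
      · rw [Set.indicator_of_notMem h, Set.indicator_of_notMem (fun c => h (this.2 c))]
    simp_rw [hAz]
    have hAm : MeasurableSet {w : Fin 2 → ℝ | ∑ i, w i ^ 2 ≤ 1 - z ^ 2} :=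
      measurableSet_le (by fun_prop) measurable_const
    rw [integral_indicator hAm, setIntegral_const]
    by_cases hz : z ∈ Set.Icc (-1:ℝ) 1
    · have hz2 : 0 ≤ 1 - z ^ 2 := by
        obtain ⟨h1, h2⟩ := hz; nlinarith
      have : {w : Fin 2 → ℝ | ∑ i, w i ^ 2 ≤ 1 - z ^ 2}
          = {w : Fin 2 → ℝ | ∑ i, w i ^ 2 ≤ (Real.sqrt (1 - z ^ 2)) ^ 2} := by
        rw [Real.sq_sqrt hz2]
      rw [this, measureReal_def, vol_sumsq _ (Real.sqrt_nonneg _), Real.sq_sqrt hz2]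
      rw [Set.indicator_of_mem hz]
      rw [ENNReal.toReal_ofReal (by positivity)]
      simp [smul_eq_mul]
    · have hz2 : 1 - z ^ 2 < 0 := by
        simp only [Set.mem_Icc, not_and_or, not_le] at hz
        rcases hz with h | h <;> nlinarith
      have : {w : Fin 2 → ℝ | ∑ i, w i ^ 2 ≤ 1 - z ^ 2} = ∅ := by
        ext w; simp only [Set.mem_setOf_eq, Set.mem_empty_iff_false, iff_false, not_le]
        have : (0:ℝ) ≤ ∑ i, w i ^ 2 := by positivity
        linarith
      rw [this, Set.indicator_of_notMem hz]
      simp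
  simp_rw [inner_eq]
  -- final 1D integral
  rw [integral_indicator measurableSet_Icc]
  rw [integral_Icc_eq_integral_Ioc, ← intervalIntegral.integral_of_le (by norm_num : (-1:ℝ) ≤ 1)]
  have hc : Continuous (fun x : ℝ => (1 - x ^ 2) * π * |x|) :=
    ((continuous_const.sub (continuous_pow 2)).mul continuous_const).mul continuous_abs
  rw [← intervalIntegral.integral_add_adjacent_intervals (b := (0:ℝ))
    (hc.intervalIntegrable _ _) (hc.intervalIntegrable _ _)]
  have hleft : ∫ x in (-1:ℝ)..0, (1 - x ^ 2) * π * |x| = ∫ x in (-1:ℝ)..0, π * x ^ 3 - π * x ^ 1 := by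
    apply intervalIntegral.integral_congr
    intro x hx
    rw [Set.uIcc_of_le (by norm_num : (-1:ℝ) ≤ 0)] at hx
    simp only
    rw [abs_of_nonpos hx.2]
    ring
  have hright : ∫ x in (0:ℝ)..1, (1 - x ^ 2) * π * |x| = ∫ x in (0:ℝ)..1, π * x ^ 1 - π * x ^ 3 := by
    apply intervalIntegral.integral_congr
    intro x hx
    rw [Set.uIcc_of_le (by norm_num : (0:ℝ) ≤ 1)] at hx
    simp only
    rw [abs_of_nonneg hx.1]
    ring
  rw [hleft, hright]
  rw [intervalIntegral.integral_sub ((by fun_prop : Continuous fun x : ℝ => π * x ^ 3).intervalIntegrable _ _)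
      ((by fun_prop : Continuous fun x : ℝ => π * x ^ 1).intervalIntegrable _ _),
    intervalIntegral.integral_sub ((by fun_prop : Continuous fun x : ℝ => π * x ^ 1).intervalIntegrable _ _)
      ((by fun_prop : Continuous fun x : ℝ => π * x ^ 3).intervalIntegrable _ _)]
  simp only [intervalIntegral.integral_const_mul, integral_pow]
  ring



lemma Cval (u : E3) :
    ∫ x : E3, (closedBall (0:E3) 1).indicator (fun x : E3 => |(inner ℝ u x : ℝ)|) x
      = ‖u‖ * (π / 2) := by
  by_cases hu : u = 0
  · simp [hu]
  have hnu : ‖u‖ ≠ 0 := norm_ne_zero_iff.2 hu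
  set w : E3 := ‖u‖⁻¹ • u with hw
  have hwn : ‖w‖ = 1 := by
    rw [hw, norm_smul, norm_inv, norm_norm, inv_mul_cancel₀ hnu]
  have hcard : Module.finrank ℝ E3 = Fintype.card (Fin 3) := by
    simp [finrank_euclideanSpace_fin]
  have horth : Orthonormal ℝ (({0} : Set (Fin 3)).restrict (fun _ : Fin 3 => w)) := by
    constructor
    · intro i; exact hwn
    · intro i j hij
      exact absurd (Subtype.ext (i.2.trans j.2.symm)) hij
  obtain ⟨b, hb⟩ := horth.exists_orthonormalBasis_extension_of_card_eq hcard
  have hb0 : b 0 = w := hb 0 rfl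
  have key : ∀ x : E3, (inner ℝ u x : ℝ) = ‖u‖ * (b.repr x 0) := by
    intro x
    rw [b.repr_apply_apply, hb0, hw, real_inner_smul_left]
    field_simp
  have step : ∀ x : E3, (closedBall (0:E3) 1).indicator (fun x : E3 => |(inner ℝ u x : ℝ)|) x
      = (closedBall (0:E3) 1).indicator (fun y : EuclideanSpace ℝ (Fin 3) => ‖u‖ * |y 0|)
          (b.repr x) := by
    intro x
    have hmem : b.repr x ∈ closedBall (0: EuclideanSpace ℝ (Fin 3)) 1 ↔ x ∈ closedBall (0:E3) 1 := by
      simp [mem_closedBall_zero_iff]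
    by_cases h : x ∈ closedBall (0:E3) 1
    · rw [Set.indicator_of_mem h, Set.indicator_of_mem (hmem.2 h), key x, abs_mul,
        abs_of_nonneg (norm_nonneg u)]
    · rw [Set.indicator_of_notMem h, Set.indicator_of_notMem (fun c => h (hmem.1 c))]
  simp_rw [step]
  rw [b.measurePreserving_repr.integral_comp (b.repr.toHomeomorph.measurableEmbedding)
      ((closedBall (0: EuclideanSpace ℝ (Fin 3)) 1).indicator
        (fun y : EuclideanSpace ℝ (Fin 3) => ‖u‖ * |y 0|))]
  have : ∀ y : EuclideanSpace ℝ (Fin 3), (closedBall (0: EuclideanSpace ℝ (Fin 3)) 1).indicator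
      (fun y => ‖u‖ * |y 0|) y = ‖u‖ * (closedBall (0: EuclideanSpace ℝ (Fin 3)) 1).indicator
      (fun y => |y 0|) y := by
    intro y
    by_cases h : y ∈ closedBall (0: EuclideanSpace ℝ (Fin 3)) 1
    · rw [Set.indicator_of_mem h, Set.indicator_of_mem h]
    · rw [Set.indicator_of_notMem h, Set.indicator_of_notMem h, mul_zero]
  simp_rw [this]
  rw [integral_const_mul, Jval]



lemma indicator_max_integrable (u : E3) :
    Integrable ((closedBall (0:E3) 1).indicator
      (fun x : E3 => max (inner ℝ u x : ℝ) 0)) := by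
  rw [integrable_indicator_iff measurableSet_closedBall]
  exact (((continuous_const.inner continuous_id).max continuous_const).continuousOn).integrableOn_compact
    (isCompact_closedBall 0 1)

lemma Bval (u : E3) :
    ∫ x : E3, (closedBall (0:E3) 1).indicator (fun x : E3 => max (inner ℝ u x : ℝ) 0) x
      = ‖u‖ * (π / 4) := by
  have h1 : ∫ x : E3, (closedBall (0:E3) 1).indicator (fun x : E3 => max (inner ℝ u x : ℝ) 0) x
      = ∫ x : E3, (closedBall (0:E3) 1).indicator (fun x : E3 => max (-(inner ℝ u x : ℝ)) 0) x := by
    rw [← integral_neg_eq_self ((closedBall (0:E3) 1).indicator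
      (fun x : E3 => max (inner ℝ u x : ℝ) 0)) volume]
    congr 1; funext x
    have hmem : -x ∈ closedBall (0:E3) 1 ↔ x ∈ closedBall (0:E3) 1 := by
      simp [mem_closedBall_zero_iff]
    by_cases h : x ∈ closedBall (0:E3) 1
    · rw [Set.indicator_of_mem (hmem.2 h), Set.indicator_of_mem h, inner_neg_right]
    · rw [Set.indicator_of_notMem (fun c => h (hmem.1 c)), Set.indicator_of_notMem h]
  have h2 : Integrable ((closedBall (0:E3) 1).indicator
      (fun x : E3 => max (-(inner ℝ u x : ℝ)) 0)) := by
    have := indicator_max_integrable (-u)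
    simpa [inner_neg_left] using this
  have h3 : (∫ x : E3, (closedBall (0:E3) 1).indicator (fun x : E3 => max (inner ℝ u x : ℝ) 0) x)
      + ∫ x : E3, (closedBall (0:E3) 1).indicator (fun x : E3 => max (-(inner ℝ u x : ℝ)) 0) x
      = ∫ x : E3, (closedBall (0:E3) 1).indicator (fun x : E3 => |(inner ℝ u x : ℝ)|) x := by
    rw [← integral_add (indicator_max_integrable u) h2]
    congr 1; funext x
    by_cases h : x ∈ closedBall (0:E3) 1
    · rw [Set.indicator_of_mem h, Set.indicator_of_mem h, Set.indicator_of_mem h,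
        max_zero_add_max_neg_zero_eq_abs_self]
    · rw [Set.indicator_of_notMem h, Set.indicator_of_notMem h, Set.indicator_of_notMem h,
        add_zero]
  rw [Cval] at h3
  linarith [h3, h1]

lemma Sval (u : E3) :
    ∫ ω : sphere (0:E3) 1, max (inner ℝ u (ω : E3) : ℝ) 0 ∂(volume : Measure E3).toSphere
      = π * ‖u‖ := by
  rw [master (fun y => max (inner ℝ u y : ℝ) 0)]
  have : ∀ x : E3, max (inner ℝ u (‖x‖⁻¹ • x) : ℝ) 0 * KK ‖x‖
      = (closedBall (0:E3) 1).indicator (fun x : E3 => max (inner ℝ u x : ℝ) 0) x := by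
    intro x
    by_cases hx0 : x = 0
    · simp [hx0, KK, Set.indicator]
    have hxpos : 0 < ‖x‖ := norm_pos_iff.2 hx0
    by_cases hx1 : ‖x‖ ≤ 1
    · rw [Set.indicator_of_mem (mem_closedBall_zero_iff.2 hx1)]
      rw [show KK ‖x‖ = ‖x‖ from by simp [KK, Set.indicator, hx1]]
      rw [real_inner_smul_right, max_mul_of_nonneg _ _ (le_of_lt hxpos), zero_mul]
      congr 1
      field_simp
    · rw [Set.indicator_of_notMem (fun c => hx1 (mem_closedBall_zero_iff.1 c))]
      rw [show KK ‖x‖ = 0 from by simp [KK, Set.indicator, hx1], mul_zero]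
  simp_rw [this]
  rw [Bval]
  ring



def gg (v v₁ y : E3) : ℝ :=
  max (inner ℝ (v - v₁) y : ℝ) 0 * ‖v - (inner ℝ y (v - v₁) : ℝ) • y‖ ^ 2

lemma gg_cont (v v₁ : E3) : Continuous (gg v v₁) := by
  unfold gg
  fun_prop

def II (v v₁ : E3) : ℝ :=
  ∫ ω : sphere (0:E3) 1, gg v v₁ ω ∂(volume : Measure E3).toSphere

lemma sphere_integrable {F : (sphere (0:E3) 1) → ℝ} (hF : Continuous F) :
    Integrable F ((volume : Measure E3).toSphere) :=
  hF.integrable_of_hasCompactSupport (HasCompactSupport.of_compactSpace _)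

lemma setint_eq (v v₁ : E3) :
    (∫ ω in {ω : sphere (0:E3) 1 | 0 ≤ (inner ℝ (v - v₁) (ω : E3) : ℝ)},
        (inner ℝ (v - v₁) (ω : E3) : ℝ) * ‖v - (inner ℝ (ω : E3) (v - v₁) : ℝ) • (ω : E3)‖ ^ 2
        ∂(volume : Measure E3).toSphere)
      = II v v₁ := by
  have hs : MeasurableSet {ω : sphere (0:E3) 1 | 0 ≤ (inner ℝ (v - v₁) (ω : E3) : ℝ)} :=
    measurableSet_le measurable_const
      ((continuous_const.inner continuous_subtype_val).measurable)
  rw [← integral_indicator hs]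
  congr 1; funext ω
  by_cases h : 0 ≤ (inner ℝ (v - v₁) (ω : E3) : ℝ)
  · rw [Set.indicator_of_mem
      (show ω ∈ {ω : sphere (0:E3) 1 | 0 ≤ (inner ℝ (v - v₁) (ω : E3) : ℝ)} from h)]
    unfold gg
    rw [max_eq_left h]
  · rw [Set.indicator_of_notMem
      (show ω ∉ {ω : sphere (0:E3) 1 | 0 ≤ (inner ℝ (v - v₁) (ω : E3) : ℝ)} from h)]
    unfold gg
    rw [max_eq_right (le_of_not_ge h), zero_mul]

lemma alg (v v₁ y : E3) (hy : ‖y‖ = 1) :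
    ‖v - (inner ℝ y (v - v₁) : ℝ) • y‖ ^ 2 + ‖v₁ + (inner ℝ y (v - v₁) : ℝ) • y‖ ^ 2
      = ‖v‖ ^ 2 + ‖v₁‖ ^ 2 := by
  rw [norm_sub_sq_real, norm_add_sq_real, real_inner_smul_right, real_inner_smul_right,
    norm_smul]
  simp only [Real.norm_eq_abs, hy, mul_one, sq_abs]
  have hcomb : (inner ℝ v y : ℝ) - (inner ℝ v₁ y : ℝ) = (inner ℝ y (v - v₁) : ℝ) := by
    rw [inner_sub_right, real_inner_comm y v, real_inner_comm y v₁]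
  linear_combination (-2 * (inner ℝ y (v - v₁) : ℝ)) * hcomb

lemma gg_neg (v v₁ y : E3) :
    gg v₁ v (-y) = max (inner ℝ (v - v₁) y : ℝ) 0
      * ‖v₁ + (inner ℝ y (v - v₁) : ℝ) • y‖ ^ 2 := by
  unfold gg
  have h1 : (inner ℝ (v₁ - v) (-y) : ℝ) = (inner ℝ (v - v₁) y : ℝ) := by
    rw [inner_neg_right, inner_sub_left, inner_sub_left]; ring
  have h2 : (inner ℝ (-y) (v₁ - v) : ℝ) • (-y) = -((inner ℝ y (v - v₁) : ℝ) • y) := by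
    rw [inner_neg_left, neg_smul, smul_neg, neg_neg, ← neg_smul]
    congr 1
    rw [inner_sub_right, inner_sub_right]
    ring
  rw [h1, h2, sub_neg_eq_add]

lemma II_add (v v₁ : E3) :
    II v v₁ + II v₁ v = π * ‖v - v₁‖ * (‖v‖ ^ 2 + ‖v₁‖ ^ 2) := by
  have h1 : II v₁ v
      = ∫ ω : sphere (0:E3) 1, gg v₁ v (-(ω:E3)) ∂(volume : Measure E3).toSphere :=
    (sphere_neg_inv (gg v₁ v)).symm
  have hint1 : Integrable (fun ω : sphere (0:E3) 1 => gg v v₁ (ω:E3))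
      ((volume : Measure E3).toSphere) :=
    sphere_integrable ((gg_cont v v₁).comp continuous_subtype_val)
  have hint2 : Integrable (fun ω : sphere (0:E3) 1 => gg v₁ v (-(ω:E3)))
      ((volume : Measure E3).toSphere) :=
    sphere_integrable (((gg_cont v₁ v).comp continuous_neg).comp continuous_subtype_val)
  rw [II, h1, ← integral_add hint1 hint2]
  have hpt : ∀ ω : sphere (0:E3) 1, gg v v₁ (ω:E3) + gg v₁ v (-(ω:E3))
      = (‖v‖ ^ 2 + ‖v₁‖ ^ 2) * max (inner ℝ (v - v₁) (ω:E3) : ℝ) 0 := by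
    intro ω
    have hy : ‖(ω:E3)‖ = 1 := mem_sphere_zero_iff_norm.1 ω.2
    rw [gg_neg]
    unfold gg
    rw [← mul_add, alg v v₁ (ω:E3) hy]
    ring
  simp_rw [hpt]
  rw [integral_const_mul, Sval]
  ring

lemma II_meas : StronglyMeasurable (fun p : E3 × E3 => II p.1 p.2) := by
  have hF : Continuous (fun q : (E3 × E3) × sphere (0:E3) 1 => gg q.1.1 q.1.2 (q.2 : E3)) := by
    have c1 : Continuous fun q : (E3 × E3) × sphere (0:E3) 1 => q.1.1 - q.1.2 :=
      (continuous_fst.fst.sub continuous_fst.snd)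
    have c2 : Continuous fun q : (E3 × E3) × sphere (0:E3) 1 => (q.2 : E3) :=
      continuous_subtype_val.comp continuous_snd
    unfold gg
    fun_prop
  exact hF.stronglyMeasurable.integral_prod_right'

lemma II_bound (v v₁ : E3) :
    |II v v₁| ≤ (4 * (‖v‖ + ‖v₁‖) ^ 3) * (((volume : Measure E3).toSphere) Set.univ).toReal := by
  have h := norm_integral_le_of_norm_le_const (μ := (volume : Measure E3).toSphere)
      (f := fun ω : sphere (0:E3) 1 => gg v v₁ (ω:E3)) (C := 4 * (‖v‖ + ‖v₁‖) ^ 3) ?_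
  · rw [Real.norm_eq_abs, measureReal_def] at h; exact h
  · filter_upwards with ω
    have hy : ‖(ω:E3)‖ = 1 := mem_sphere_zero_iff_norm.1 ω.2
    set c := ‖v‖ + ‖v₁‖ with hc
    have hc0 : 0 ≤ c := by positivity
    have ht1 : |(inner ℝ (v - v₁) (ω:E3) : ℝ)| ≤ c := by
      calc |(inner ℝ (v - v₁) (ω:E3) : ℝ)| ≤ ‖v - v₁‖ * ‖(ω:E3)‖ := abs_real_inner_le_norm _ _
        _ = ‖v - v₁‖ := by rw [hy, mul_one]
        _ ≤ c := norm_sub_le _ _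
    have ht2 : |(inner ℝ (ω:E3) (v - v₁) : ℝ)| ≤ c := by
      rw [real_inner_comm]; exact ht1
    have hn : ‖v - (inner ℝ (ω:E3) (v - v₁) : ℝ) • (ω:E3)‖ ≤ 2 * c := by
      calc ‖v - (inner ℝ (ω:E3) (v - v₁) : ℝ) • (ω:E3)‖
          ≤ ‖v‖ + ‖(inner ℝ (ω:E3) (v - v₁) : ℝ) • (ω:E3)‖ := norm_sub_le _ _
        _ = ‖v‖ + |(inner ℝ (ω:E3) (v - v₁) : ℝ)| := by
            rw [norm_smul, Real.norm_eq_abs, hy, mul_one]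
        _ ≤ c + c := add_le_add (by rw [hc]; nlinarith [norm_nonneg v₁]) ht2
        _ = 2 * c := by ring
    have hmax0 : 0 ≤ max (inner ℝ (v - v₁) (ω:E3) : ℝ) 0 := le_max_right _ _
    have hmaxc : max (inner ℝ (v - v₁) (ω:E3) : ℝ) 0 ≤ c :=
      max_le (le_trans (le_abs_self _) ht1) hc0
    have hnn0 : (0:ℝ) ≤ ‖v - (inner ℝ (ω:E3) (v - v₁) : ℝ) • (ω:E3)‖ := norm_nonneg _
    rw [Real.norm_eq_abs]
    unfold gg
    rw [abs_mul, abs_of_nonneg hmax0, abs_of_nonneg (by positivity : (0:ℝ) ≤ ‖v - (inner ℝ (ω:E3) (v - v₁) : ℝ) • (ω:E3)‖ ^ 2)]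
    have hsq : ‖v - (inner ℝ (ω:E3) (v - v₁) : ℝ) • (ω:E3)‖ ^ 2 ≤ (2 * c) ^ 2 := by nlinarith
    calc max (inner ℝ (v - v₁) (ω:E3) : ℝ) 0 * ‖v - (inner ℝ (ω:E3) (v - v₁) : ℝ) • (ω:E3)‖ ^ 2
        ≤ c * (2 * c) ^ 2 := mul_le_mul hmaxc hsq (by positivity) hc0
      _ = 4 * c ^ 3 := by ring

lemma cube_bound (v v₁ : E3) :
    (‖v‖ + ‖v₁‖) ^ 3 ≤ 8 * ((1 + ‖v‖ ^ 2) ^ ((3:ℝ)/2) * (1 + ‖v₁‖ ^ 2) ^ ((3:ℝ)/2)) := by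
  set a := Real.sqrt (1 + ‖v‖ ^ 2) with ha
  set b := Real.sqrt (1 + ‖v₁‖ ^ 2) with hb
  have ha2 : a ^ 2 = 1 + ‖v‖ ^ 2 := Real.sq_sqrt (by positivity)
  have hb2 : b ^ 2 = 1 + ‖v₁‖ ^ 2 := Real.sq_sqrt (by positivity)
  have ha0 : 0 ≤ a := Real.sqrt_nonneg _
  have hb0 : 0 ≤ b := Real.sqrt_nonneg _
  have ha1 : 1 ≤ a := by nlinarith [sq_nonneg ‖v‖]
  have hb1 : 1 ≤ b := by nlinarith [sq_nonneg ‖v₁‖]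
  have hva : ‖v‖ ≤ a := by nlinarith [norm_nonneg v]
  have hvb : ‖v₁‖ ≤ b := by nlinarith [norm_nonneg v₁]
  have key : ‖v‖ + ‖v₁‖ ≤ 2 * (a * b) := by nlinarith
  have h3 : (‖v‖ + ‖v₁‖) ^ 3 ≤ (2 * (a * b)) ^ 3 :=
    pow_le_pow_left₀ (by positivity) key 3
  have ha' : a ^ 3 = (1 + ‖v‖ ^ 2) ^ ((3:ℝ)/2) := by
    rw [ha, ← Real.rpow_natCast (Real.sqrt _) 3, Real.sqrt_eq_rpow,
      ← Real.rpow_mul (by positivity)]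
    norm_num
  have hb' : b ^ 3 = (1 + ‖v₁‖ ^ 2) ^ ((3:ℝ)/2) := by
    rw [hb, ← Real.rpow_natCast (Real.sqrt _) 3, Real.sqrt_eq_rpow,
      ← Real.rpow_mul (by positivity)]
    norm_num
  calc (‖v‖ + ‖v₁‖) ^ 3 ≤ (2 * (a * b)) ^ 3 := h3
    _ = 8 * (a ^ 3 * b ^ 3) := by ring
    _ = 8 * ((1 + ‖v‖ ^ 2) ^ ((3:ℝ)/2) * (1 + ‖v₁‖ ^ 2) ^ ((3:ℝ)/2)) := by rw [ha', hb']


/-- Symmetrization identity (4.5): computation of `A₂`. -/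
theorem A2_symmetrization (f : EuclideanSpace ℝ (Fin 3) → ℝ)
    (hnn : ∀ v, 0 ≤ f v) (hm : Measurable f)
    (hi : Integrable f)
    (hi3 : Integrable (fun v => f v * (1 + ‖v‖ ^ 2) ^ ((3:ℝ)/2))) :
    (∫ v, ∫ v₁,
      (∫ ω in {ω : Metric.sphere (0 : EuclideanSpace ℝ (Fin 3)) 1 |
          0 ≤ (inner ℝ (v - v₁) (ω : EuclideanSpace ℝ (Fin 3)) : ℝ)},
        (inner ℝ (v - v₁) (ω : EuclideanSpace ℝ (Fin 3)) : ℝ) *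
          ‖v - (inner ℝ (ω : EuclideanSpace ℝ (Fin 3)) (v - v₁) : ℝ) •
            (ω : EuclideanSpace ℝ (Fin 3))‖ ^ 2
        ∂((volume : Measure (EuclideanSpace ℝ (Fin 3))).toSphere)) * (f v * f v₁)) =
    (π / 2) * ∫ v, ∫ v₁, ‖v - v₁‖ * (‖v‖ ^ 2 + ‖v₁‖ ^ 2) * (f v * f v₁) := by
  classical
  have hM0 : 0 ≤ (((volume : Measure E3).toSphere) Set.univ).toReal := ENNReal.toReal_nonneg
  set M := (((volume : Measure E3).toSphere) Set.univ).toReal with hMdef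
  have hA0 : ∀ v : E3, 0 ≤ (1 + ‖v‖ ^ 2) ^ ((3:ℝ)/2) := fun v =>
    Real.rpow_nonneg (by positivity) _
  -- step 1 : rewrite inner ℝ set integrals
  have hL : (∫ v, ∫ v₁,
      (∫ ω in {ω : Metric.sphere (0 : EuclideanSpace ℝ (Fin 3)) 1 |
          0 ≤ (inner ℝ (v - v₁) (ω : EuclideanSpace ℝ (Fin 3)) : ℝ)},
        (inner ℝ (v - v₁) (ω : EuclideanSpace ℝ (Fin 3)) : ℝ) *
          ‖v - (inner ℝ (ω : EuclideanSpace ℝ (Fin 3)) (v - v₁) : ℝ) •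
            (ω : EuclideanSpace ℝ (Fin 3))‖ ^ 2
        ∂((volume : Measure (EuclideanSpace ℝ (Fin 3))).toSphere)) * (f v * f v₁)) =
      ∫ v, ∫ v₁, II v v₁ * (f v * f v₁) := by
    congr 1; funext v; congr 1; funext v₁
    rw [setint_eq]
  rw [hL]
  -- integrability of Φ
  have hΦmeas : AEStronglyMeasurable (fun p : E3 × E3 => II p.1 p.2 * (f p.1 * f p.2))
      ((volume : Measure E3).prod volume) :=
    II_meas.aestronglyMeasurable.mul
      (((hm.comp measurable_fst).mul (hm.comp measurable_snd)).aestronglyMeasurable)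
  have hdom : Integrable (fun p : E3 × E3 =>
      (32 * M) * ((f p.1 * (1 + ‖p.1‖ ^ 2) ^ ((3:ℝ)/2)) *
        (f p.2 * (1 + ‖p.2‖ ^ 2) ^ ((3:ℝ)/2))))
      ((volume : Measure E3).prod volume) := (hi3.mul_prod hi3).const_mul _
  have hΦb : ∀ p : E3 × E3, ‖II p.1 p.2 * (f p.1 * f p.2)‖ ≤
      (32 * M) * ((f p.1 * (1 + ‖p.1‖ ^ 2) ^ ((3:ℝ)/2)) *
        (f p.2 * (1 + ‖p.2‖ ^ 2) ^ ((3:ℝ)/2))) := by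
    intro p
    have hffa : 0 ≤ f p.1 * f p.2 := mul_nonneg (hnn _) (hnn _)
    rw [Real.norm_eq_abs, abs_mul, abs_of_nonneg hffa]
    have h3 : |II p.1 p.2| ≤ 32 * M *
        ((1 + ‖p.1‖ ^ 2) ^ ((3:ℝ)/2) * (1 + ‖p.2‖ ^ 2) ^ ((3:ℝ)/2)) := by
      calc |II p.1 p.2| ≤ (4 * (‖p.1‖ + ‖p.2‖) ^ 3) * M := II_bound p.1 p.2
        _ ≤ (4 * (8 * ((1 + ‖p.1‖ ^ 2) ^ ((3:ℝ)/2) * (1 + ‖p.2‖ ^ 2) ^ ((3:ℝ)/2)))) * M := by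
            apply mul_le_mul_of_nonneg_right _ hM0
            nlinarith [cube_bound p.1 p.2]
        _ = 32 * M * ((1 + ‖p.1‖ ^ 2) ^ ((3:ℝ)/2) * (1 + ‖p.2‖ ^ 2) ^ ((3:ℝ)/2)) := by ring
    calc |II p.1 p.2| * (f p.1 * f p.2)
        ≤ (32 * M * ((1 + ‖p.1‖ ^ 2) ^ ((3:ℝ)/2) * (1 + ‖p.2‖ ^ 2) ^ ((3:ℝ)/2)))
          * (f p.1 * f p.2) := mul_le_mul_of_nonneg_right h3 hffa
      _ = (32 * M) * ((f p.1 * (1 + ‖p.1‖ ^ 2) ^ ((3:ℝ)/2)) *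
            (f p.2 * (1 + ‖p.2‖ ^ 2) ^ ((3:ℝ)/2))) := by ring
  have hΦint : Integrable (fun p : E3 × E3 => II p.1 p.2 * (f p.1 * f p.2))
      ((volume : Measure E3).prod volume) :=
    hdom.mono' hΦmeas (Filter.Eventually.of_forall hΦb)
  -- integrability of Ψ
  have hΨmeas : AEStronglyMeasurable
      (fun p : E3 × E3 => ‖p.1 - p.2‖ * (‖p.1‖ ^ 2 + ‖p.2‖ ^ 2) * (f p.1 * f p.2))
      ((volume : Measure E3).prod volume) :=
    (((measurable_fst.sub measurable_snd).norm.mul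
      ((measurable_fst.norm.pow_const 2).add (measurable_snd.norm.pow_const 2))).mul
      ((hm.comp measurable_fst).mul (hm.comp measurable_snd))).aestronglyMeasurable
  have hΨb : ∀ p : E3 × E3, ‖‖p.1 - p.2‖ * (‖p.1‖ ^ 2 + ‖p.2‖ ^ 2) * (f p.1 * f p.2)‖ ≤
      (16:ℝ) * ((f p.1 * (1 + ‖p.1‖ ^ 2) ^ ((3:ℝ)/2)) *
        (f p.2 * (1 + ‖p.2‖ ^ 2) ^ ((3:ℝ)/2))) := by
    intro p
    have hffa : 0 ≤ f p.1 * f p.2 := mul_nonneg (hnn _) (hnn _)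
    have hc0 : (0:ℝ) ≤ ‖p.1‖ + ‖p.2‖ := by positivity
    have h1 : ‖p.1 - p.2‖ * (‖p.1‖ ^ 2 + ‖p.2‖ ^ 2) ≤ 2 * (‖p.1‖ + ‖p.2‖) ^ 3 := by
      have := norm_sub_le p.1 p.2
      nlinarith [norm_nonneg p.1, norm_nonneg p.2, norm_nonneg (p.1 - p.2)]
    have h2 : ‖p.1 - p.2‖ * (‖p.1‖ ^ 2 + ‖p.2‖ ^ 2) ≤
        16 * ((1 + ‖p.1‖ ^ 2) ^ ((3:ℝ)/2) * (1 + ‖p.2‖ ^ 2) ^ ((3:ℝ)/2)) := by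
      nlinarith [cube_bound p.1 p.2]
    rw [Real.norm_eq_abs, abs_mul, abs_of_nonneg hffa,
      abs_of_nonneg (by positivity : (0:ℝ) ≤ ‖p.1 - p.2‖ * (‖p.1‖ ^ 2 + ‖p.2‖ ^ 2))]
    calc ‖p.1 - p.2‖ * (‖p.1‖ ^ 2 + ‖p.2‖ ^ 2) * (f p.1 * f p.2)
        ≤ (16 * ((1 + ‖p.1‖ ^ 2) ^ ((3:ℝ)/2) * (1 + ‖p.2‖ ^ 2) ^ ((3:ℝ)/2)))
          * (f p.1 * f p.2) := mul_le_mul_of_nonneg_right h2 hffa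
      _ = (16:ℝ) * ((f p.1 * (1 + ‖p.1‖ ^ 2) ^ ((3:ℝ)/2)) *
            (f p.2 * (1 + ‖p.2‖ ^ 2) ^ ((3:ℝ)/2))) := by ring
  have hΨint : Integrable
      (fun p : E3 × E3 => ‖p.1 - p.2‖ * (‖p.1‖ ^ 2 + ‖p.2‖ ^ 2) * (f p.1 * f p.2))
      ((volume : Measure E3).prod volume) :=
    ((hi3.mul_prod hi3).const_mul 16).mono' hΨmeas (Filter.Eventually.of_forall hΨb)
  -- convert to product integrals
  have e1 : (∫ v, ∫ v₁, II v v₁ * (f v * f v₁)) =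
      ∫ p : E3 × E3, II p.1 p.2 * (f p.1 * f p.2) ∂((volume : Measure E3).prod volume) :=
    (integral_prod _ hΦint).symm
  have e2 : (∫ v, ∫ v₁, ‖v - v₁‖ * (‖v‖ ^ 2 + ‖v₁‖ ^ 2) * (f v * f v₁)) =
      ∫ p : E3 × E3, ‖p.1 - p.2‖ * (‖p.1‖ ^ 2 + ‖p.2‖ ^ 2) * (f p.1 * f p.2)
        ∂((volume : Measure E3).prod volume) :=
    (integral_prod _ hΨint).symm
  rw [e1, e2]
  -- symmetrize
  have hswap : (∫ p : E3 × E3, II p.1 p.2 * (f p.1 * f p.2)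
        ∂((volume : Measure E3).prod volume))
      = ∫ p : E3 × E3, II p.2 p.1 * (f p.2 * f p.1)
        ∂((volume : Measure E3).prod volume) :=
    (integral_prod_swap (fun p : E3 × E3 => II p.1 p.2 * (f p.1 * f p.2))).symm
  have hswapint : Integrable (fun p : E3 × E3 => II p.2 p.1 * (f p.2 * f p.1))
      ((volume : Measure E3).prod volume) := hΦint.swap
  have hdouble : (2:ℝ) * ∫ p : E3 × E3, II p.1 p.2 * (f p.1 * f p.2)
        ∂((volume : Measure E3).prod volume)
      = π * ∫ p : E3 × E3, ‖p.1 - p.2‖ * (‖p.1‖ ^ 2 + ‖p.2‖ ^ 2) * (f p.1 * f p.2)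
        ∂((volume : Measure E3).prod volume) := by
    have hsum : (2:ℝ) * ∫ p : E3 × E3, II p.1 p.2 * (f p.1 * f p.2)
          ∂((volume : Measure E3).prod volume)
        = ∫ p : E3 × E3, (II p.1 p.2 * (f p.1 * f p.2) + II p.2 p.1 * (f p.2 * f p.1))
          ∂((volume : Measure E3).prod volume) := by
      rw [integral_add hΦint hswapint]
      rw [← hswap]
      ring
    rw [hsum]
    have hpt : ∀ p : E3 × E3, II p.1 p.2 * (f p.1 * f p.2) + II p.2 p.1 * (f p.2 * f p.1)
        = π * (‖p.1 - p.2‖ * (‖p.1‖ ^ 2 + ‖p.2‖ ^ 2) * (f p.1 * f p.2)) := by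
      intro p
      have h := II_add p.1 p.2
      linear_combination (f p.1 * f p.2) * h
    simp_rw [hpt]
    rw [integral_const_mul]
  linarith [hdouble]
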